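/- arXiv:1602.06602 — 3 statements merged into one kernel-verified Lean document; each statement's English description precedes it below -/
import Mathlib

section
/- For every integer k ≥ 2, Wilkinson's function f(k) = (∏_{r=2}^{k} r^{1/(r−1)})^{1/2} satisfies f(k) ≤ 2 · k^{(1/4)·log k}, where log denotes the natural logarithm. -/
open Finset Real

lemma log_taylor_bounds {t : ℝ} (h0 : 0 ≤ t) (h1 : t ≤ 1/2) :
    t - t^2/2 - 2*t^3 ≤ Real.log (1+t) ∧ Real.log (1+t) ≤ t - t^2/2 + 2*t^3 := by
  have habs : |(-t)| < 1 := by rw [abs_neg, abs_of_nonneg h0]; linarith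
  have h := Real.abs_log_sub_add_sum_range_le habs 2
  rw [abs_neg, abs_of_nonneg h0] at h
  have hsum : (∑ i ∈ Finset.range 2, (-t) ^ (i + 1) / ((i:ℝ) + 1)) = -t + t^2/2 := by
    simp [Finset.sum_range_succ]
    ring
  rw [show (1:ℝ) - -t = 1 + t by ring] at h
  rw [hsum] at h
  norm_num at h
  have hden : t^3 / (1 - t) ≤ 2*t^3 := by
    rcases eq_or_lt_of_le h0 with h'|h'
    · simp [← h']
    · rw [div_le_iff₀ (by linarith)]
      nlinarith [mul_nonneg (pow_nonneg h0 3) (by linarith : (0:ℝ) ≤ 1 - 2*t)]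
  rw [abs_le] at h
  constructor <;> nlinarith [h.1, h.2]

lemma log3_bounds : 1.0963 ≤ Real.log 3 ∧ Real.log 3 ≤ 1.1003 := by
  have key : 2 * Real.log 3 = 3 * Real.log 2 + Real.log (1 + 1/8) := by
    rw [show (1:ℝ) + 1/8 = 9/8 by norm_num,
      Real.log_div (by norm_num) (by norm_num),
      show (9:ℝ) = 3^2 by norm_num, show (8:ℝ) = 2^3 by norm_num,
      Real.log_pow, Real.log_pow]
    push_cast; ring
  have ht := log_taylor_bounds (t := 1/8) (by norm_num) (by norm_num)
  have h2 := Real.log_two_gt_d9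
  have h2' := Real.log_two_lt_d9
  norm_num at ht ⊢
  constructor <;> nlinarith [ht.1, ht.2]

lemma log5_bounds : 1.6094 ≤ Real.log 5 ∧ Real.log 5 ≤ 1.6095 := by
  have key : 3 * Real.log 5 = 7 * Real.log 2 - Real.log (1 + 3/125) := by
    rw [show (1:ℝ) + 3/125 = 128/125 by norm_num,
      Real.log_div (by norm_num) (by norm_num),
      show (128:ℝ) = 2^7 by norm_num, show (125:ℝ) = 5^3 by norm_num,
      Real.log_pow, Real.log_pow]
    push_cast; ring
  have ht := log_taylor_bounds (t := 3/125) (by norm_num) (by norm_num)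
  have h2 := Real.log_two_gt_d9
  have h2' := Real.log_two_lt_d9
  norm_num at ht ⊢
  constructor <;> nlinarith [ht.1, ht.2]

lemma log7_bounds : 1.9447 ≤ Real.log 7 ∧ Real.log 7 ≤ 1.9468 := by
  have key : 2 * Real.log 7 = 4 * Real.log 2 + Real.log 3 + Real.log (1 + 1/48) := by
    rw [show (1:ℝ) + 1/48 = 49/48 by norm_num,
      Real.log_div (by norm_num) (by norm_num),
      show (49:ℝ) = 7^2 by norm_num, show (48:ℝ) = 2^4 * 3 by norm_num,
      Real.log_mul (by norm_num) (by norm_num),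
      Real.log_pow, Real.log_pow]
    push_cast; ring
  have ht := log_taylor_bounds (t := 1/48) (by norm_num) (by norm_num)
  have h2 := Real.log_two_gt_d9
  have h2' := Real.log_two_lt_d9
  have h3 := log3_bounds
  norm_num at ht ⊢
  constructor <;> nlinarith [ht.1, ht.2, h3.1, h3.2]

lemma log11_bounds : 2.3977 ≤ Real.log 11 ∧ Real.log 11 ≤ 2.3982 := by
  have key : 2 * Real.log 11 = 7 * Real.log 2 - Real.log (1 + 7/121) := by
    rw [show (1:ℝ) + 7/121 = 128/121 by norm_num,
      Real.log_div (by norm_num) (by norm_num),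
      show (128:ℝ) = 2^7 by norm_num, show (121:ℝ) = 11^2 by norm_num,
      Real.log_pow, Real.log_pow]
    push_cast; ring
  have ht := log_taylor_bounds (t := 7/121) (by norm_num) (by norm_num)
  have h2 := Real.log_two_gt_d9
  have h2' := Real.log_two_lt_d9
  norm_num at ht ⊢
  constructor <;> nlinarith [ht.1, ht.2]

lemma poly_step (a u b c : ℝ) (ha : 0 < a) (ha2 : a ≤ 1/11) (hu : 0 < u) (hu2 : u ≤ 1/12)
    (hau : a - u = a*u) (hb : 2.4 ≤ b) (hc : 0 ≤ c)
    (hlow : a - a^2/2 - 2*a^3 ≤ b - c) (hup : b - c ≤ a) :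
    (b + u)*u ≤ b^2/2 - c^2/2 + (a - u) := by
  have hm0 : 0 < a - a^2/2 - 2*a^3 := by nlinarith [sq_nonneg a, mul_pos ha ha]
  have hsq : (a - a^2/2 - 2*a^3)*(2*b-a)/2 ≤ b^2/2 - c^2/2 := by
    have h1 : 0 ≤ ((b-c) - (a - a^2/2 - 2*a^3)) * (2*b - (b-c) - (a - a^2/2 - 2*a^3)) := by
      apply mul_nonneg (by linarith)
      nlinarith
    have h2 : 0 ≤ (a - a^2/2 - 2*a^3) * (a - (a - a^2/2 - 2*a^3)) := by
      apply mul_nonneg hm0.le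
      nlinarith [sq_nonneg a, mul_pos ha ha]
    nlinarith [h1, h2]
  have h11 : 11/12*a ≤ u := by nlinarith
  have hD : (11/12)*a^2*b ≤ a*b*u := by
    nlinarith [mul_nonneg (mul_nonneg ha.le (by linarith : (0:ℝ) ≤ b))
      (by linarith : 0 ≤ u - 11/12*a)]
  have hcub : 2*a^3*b ≤ (2/11)*a^2*b := by
    nlinarith [mul_nonneg (mul_nonneg (sq_nonneg a) (by linarith : (0:ℝ) ≤ b))
      (by linarith : 0 ≤ 1/11 - a)]
  have hfin : a^2/2 ≤ (31/132)*a^2*b := by nlinarith [sq_nonneg a]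
  have hid : (a - a^2/2 - 2*a^3)*(2*b-a)/2 + (a-u) - (b+u)*u =
      a*b*u - a^2*b/2 - 2*a^3*b + a*u^2 - a^2/2 + a^3/4 + a^4 := by
    linear_combination (1 + b + u) * hau
  have hpos1 : 0 ≤ a*u^2 := mul_nonneg ha.le (sq_nonneg u)
  have hpos2 : 0 ≤ a^3/4 := by positivity
  have hpos3 : 0 ≤ a^4 := by positivity
  linarith [hid, hD, hcub, hfin, hpos1, hpos2, hpos3, hsq]

set_option maxHeartbeats 2000000 in
lemma key_sum (k : ℕ) (hk : 2 ≤ k) :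
    ∑ r ∈ Finset.Icc 2 k, Real.log r / ((r:ℝ) - 1) ≤
      2*Real.log 2 + (Real.log k)^2/2 := by
  have h2 := Real.log_two_gt_d9
  have h2' := Real.log_two_lt_d9
  have h3 := log3_bounds
  have h5 := log5_bounds
  have h7 := log7_bounds
  have h11 := log11_bounds
  have l4 : Real.log 4 = 2*Real.log 2 := by
    rw [show (4:ℝ) = 2^2 by norm_num, Real.log_pow]; push_cast; ring
  have l6 : Real.log 6 = Real.log 2 + Real.log 3 := by
    rw [show (6:ℝ) = 2*3 by norm_num, Real.log_mul (by norm_num) (by norm_num)]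
  have l8 : Real.log 8 = 3*Real.log 2 := by
    rw [show (8:ℝ) = 2^3 by norm_num, Real.log_pow]; push_cast; ring
  have l9 : Real.log 9 = 2*Real.log 3 := by
    rw [show (9:ℝ) = 3^2 by norm_num, Real.log_pow]; push_cast; ring
  have l10 : Real.log 10 = Real.log 2 + Real.log 5 := by
    rw [show (10:ℝ) = 2*5 by norm_num, Real.log_mul (by norm_num) (by norm_num)]
  have l12 : Real.log 12 = 2*Real.log 2 + Real.log 3 := by
    rw [show (12:ℝ) = 2^2*3 by norm_num, Real.log_mul (by norm_num) (by norm_num),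
      Real.log_pow]
    push_cast; ring
  -- the strengthened induction for k ≥ 12
  have strong : ∀ n : ℕ, 12 ≤ n →
      ∑ r ∈ Finset.Icc 2 n, Real.log r / ((r:ℝ) - 1) ≤
        2*Real.log 2 + (Real.log ((n:ℝ)-1))^2/2 - 1/((n:ℝ)-1) := by
    intro n hn
    induction n, hn using Nat.le_induction with
    | base =>
      rw [show Finset.Icc 2 12 = ({2,3,4,5,6,7,8,9,10,11,12} : Finset ℕ) by decide]
      norm_num [Finset.sum_insert, Finset.mem_insert, l4, l6, l8, l9, l10, l12]
      nlinarith [h3.1, h3.2, h5.1, h5.2, h7.1, h7.2, h11.1, h11.2,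
        sq_nonneg (Real.log 11 - 2.3977)]
    | succ n hn ih =>
      rw [Finset.sum_Icc_succ_top (by omega : 2 ≤ n + 1)]
      have hx12 : (12:ℝ) ≤ (n:ℝ) := by exact_mod_cast hn
      set x : ℝ := (n:ℝ) with hxdef
      have hx1 : (11:ℝ) ≤ x - 1 := by linarith
      have hx0 : (0:ℝ) < x := by linarith
      have hx10 : (0:ℝ) < x - 1 := by linarith
      set a : ℝ := 1/(x-1) with hadef
      set u : ℝ := 1/x with hudef
      have ha : 0 < a := by positivity
      have hu : 0 < u := by positivity
      have ha2 : a ≤ 1/11 := by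
        rw [hadef, div_le_div_iff₀ hx10 (by norm_num)]; linarith
      have hu2 : u ≤ 1/12 := by
        rw [hudef, div_le_div_iff₀ hx0 (by norm_num)]; linarith
      have hau : a - u = a*u := by rw [hadef, hudef]; field_simp; ring
      set b : ℝ := Real.log x with hbdef
      set c : ℝ := Real.log (x-1) with hcdef
      have hc : 0 ≤ c := Real.log_nonneg (by linarith)
      have hb : 2.4 ≤ b := by
        have h12 : Real.log 12 ≤ b := Real.log_le_log (by norm_num) hx12
        rw [l12] at h12
        linarith [h3.1]
      have hbc : b - c = Real.log (1 + a) := by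
        rw [hbdef, hcdef, show (1:ℝ) + a = x/(x-1) by rw [hadef]; field_simp; ring,
          Real.log_div (by linarith) (by linarith)]
      have ht := log_taylor_bounds (t := a) ha.le (by linarith)
      have hlow : a - a^2/2 - 2*a^3 ≤ b - c := by rw [hbc]; exact ht.1
      have hup : b - c ≤ a := by
        rw [hbc]
        have := Real.log_le_sub_one_of_pos (show (0:ℝ) < 1 + a by linarith)
        linarith
      have hL : Real.log (x+1) ≤ b + u := by
        have hpos : (0:ℝ) < (x+1)/x := by positivity
        have h := Real.log_le_sub_one_of_pos hpos
        rw [Real.log_div (by linarith) (by linarith)] at h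
        have : (x+1)/x - 1 = u := by rw [hudef]; field_simp; ring
        rw [this] at h
        linarith
      have hps := poly_step a u b c ha ha2 hu hu2 hau hb hc hlow hup
      have hterm : Real.log (x+1) / x ≤ (b+u)*u := by
        rw [div_eq_mul_one_div, ← hudef]
        exact mul_le_mul_of_nonneg_right hL hu.le
      have hcast : (((n:ℕ)+1 : ℕ) : ℝ) = x + 1 := by push_cast; ring
      rw [hcast, show x + 1 - 1 = x from by ring]
      linarith [ih, hterm, hps]
  rcases le_or_gt 12 k with h12 | h12
  · have := strong k h12
    have hk1 : (11:ℝ) ≤ (k:ℝ) - 1 := by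
      have : (12:ℝ) ≤ (k:ℝ) := by exact_mod_cast h12
      linarith
    have hlog : Real.log ((k:ℝ)-1) ≤ Real.log k := Real.log_le_log (by linarith) (by linarith)
    have hlognn : 0 ≤ Real.log ((k:ℝ)-1) := Real.log_nonneg (by linarith)
    have hsq : (Real.log ((k:ℝ)-1))^2 ≤ (Real.log k)^2 := by
      apply pow_le_pow_left₀ hlognn hlog
    have hinv : 0 < 1/((k:ℝ)-1) := by positivity
    linarith
  · interval_cases k
    · rw [show Finset.Icc 2 2 = ({2} : Finset ℕ) by decide]
      norm_num [Finset.sum_insert, Finset.mem_insert, l4, l6, l8, l9, l10]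
      nlinarith [sq_nonneg (Real.log 2)]
    · rw [show Finset.Icc 2 3 = ({2,3} : Finset ℕ) by decide]
      norm_num [Finset.sum_insert, Finset.mem_insert, l4, l6, l8, l9, l10]
      nlinarith [sq_nonneg (Real.log 3)]
    · rw [show Finset.Icc 2 4 = ({2,3,4} : Finset ℕ) by decide]
      norm_num [Finset.sum_insert, Finset.mem_insert, l4, l6, l8, l9, l10]
      nlinarith [sq_nonneg (2*Real.log 2 - 1.38)]
    · rw [show Finset.Icc 2 5 = ({2,3,4,5} : Finset ℕ) by decide]
      norm_num [Finset.sum_insert, Finset.mem_insert, l4, l6, l8, l9, l10]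
      nlinarith [sq_nonneg (Real.log 5 - 1.6), h5.1, h5.2]
    · rw [show Finset.Icc 2 6 = ({2,3,4,5,6} : Finset ℕ) by decide]
      norm_num [Finset.sum_insert, Finset.mem_insert, l4, l6, l8, l9, l10]
      nlinarith [sq_nonneg (Real.log 2 + Real.log 3 - 1.78), h5.1, h5.2]
    · rw [show Finset.Icc 2 7 = ({2,3,4,5,6,7} : Finset ℕ) by decide]
      norm_num [Finset.sum_insert, Finset.mem_insert, l4, l6, l8, l9, l10]
      nlinarith [sq_nonneg (Real.log 7 - 1.94), h5.1, h5.2, h7.1, h7.2]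
    · rw [show Finset.Icc 2 8 = ({2,3,4,5,6,7,8} : Finset ℕ) by decide]
      norm_num [Finset.sum_insert, Finset.mem_insert, l4, l6, l8, l9, l10]
      nlinarith [sq_nonneg (3*Real.log 2 - 2.07), h5.1, h5.2, h7.1, h7.2]
    · rw [show Finset.Icc 2 9 = ({2,3,4,5,6,7,8,9} : Finset ℕ) by decide]
      norm_num [Finset.sum_insert, Finset.mem_insert, l4, l6, l8, l9, l10]
      nlinarith [sq_nonneg (2*Real.log 3 - 2.19), h5.1, h5.2, h7.1, h7.2]
    · rw [show Finset.Icc 2 10 = ({2,3,4,5,6,7,8,9,10} : Finset ℕ) by decide]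
      norm_num [Finset.sum_insert, Finset.mem_insert, l4, l6, l8, l9, l10]
      nlinarith [sq_nonneg (Real.log 2 + Real.log 5 - 2.3), h5.1, h5.2, h7.1, h7.2]
    · rw [show Finset.Icc 2 11 = ({2,3,4,5,6,7,8,9,10,11} : Finset ℕ) by decide]
      norm_num [Finset.sum_insert, Finset.mem_insert, l4, l6, l8, l9, l10]
      nlinarith [sq_nonneg (Real.log 11 - 2.39), h5.1, h5.2, h7.1, h7.2, h11.1, h11.2]

/-- **Bound on Wilkinson's function.** For every integer `k ≥ 2`,
`f(k) = (∏_{r=2}^k r^{1/(r-1)})^{1/2} ≤ 2 k^{(1/4) log k}` (natural logarithm). -/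
theorem wilkinson_function_bound (k : ℕ) (hk : 2 ≤ k) :
    (∏ r ∈ Finset.Icc 2 k, (r : ℝ) ^ (((r : ℝ) - 1)⁻¹)) ^ ((1 : ℝ) / 2) ≤
      2 * (k : ℝ) ^ ((1 / 4 : ℝ) * Real.log k) := by
  have hk0 : (0:ℝ) < (k:ℝ) := by exact_mod_cast (by omega : 0 < k)
  have hfac : ∀ r ∈ Finset.Icc 2 k, (0:ℝ) < (r : ℝ) ^ (((r : ℝ) - 1)⁻¹) := by
    intro r hr
    have hr0 : 0 < r := by have := (Finset.mem_Icc.mp hr).1; omega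
    exact Real.rpow_pos_of_pos (by exact_mod_cast hr0) _
  have hP : 0 < ∏ r ∈ Finset.Icc 2 k, (r : ℝ) ^ (((r : ℝ) - 1)⁻¹) := Finset.prod_pos hfac
  have hlogP : Real.log (∏ r ∈ Finset.Icc 2 k, (r : ℝ) ^ (((r : ℝ) - 1)⁻¹)) =
      ∑ r ∈ Finset.Icc 2 k, Real.log r / ((r:ℝ)-1) := by
    rw [Real.log_prod (fun r hr => (hfac r hr).ne')]
    refine Finset.sum_congr rfl (fun r hr => ?_)
    have hr0 : 0 < r := by have := (Finset.mem_Icc.mp hr).1; omega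
    rw [Real.log_rpow (by exact_mod_cast hr0), div_eq_mul_inv, mul_comm]
  have hkey := key_sum k hk
  rw [← hlogP] at hkey
  have hR : 2 * (k:ℝ) ^ ((1/4:ℝ) * Real.log k) =
      Real.exp (Real.log 2 + Real.log k * ((1/4) * Real.log k)) := by
    rw [Real.exp_add, Real.rpow_def_of_pos hk0, Real.exp_log two_pos]
  rw [hR, Real.rpow_def_of_pos hP]
  exact Real.exp_le_exp.mpr (by nlinarith [hkey])
end

section
/- Let n ≥ 2, let β_1,…,β_{n−1} ∈ (0,1], and let A_1 be the n×n real matrix with (A_1)_{st} = 1 if s = t or t = n, (A_1)_{st} = −β_t^{-1} if s > t and t < n, and (A_1)_{st} = 0 otherwise. Perform k GE steps on A_1 (1 ≤ k ≤ n−1) with the diagonal pivots (1,1), (2,2), …, (k,k). Then for all indices s,t > k: A^{(k)}_{st} = ∏_{r=1}^{k} (1 + β_r^{-1}) if t = n, and A^{(k)}_{st} = (A_1)_{st} if t < n; moreover every entry of A^{(k)} in rows 1,…,k or columns 1,…,k is zero. -/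
open Finset Real

/-- One Gaussian elimination step on `A` with pivot position `(i, j)`:
`A_{st} - A_{sj} A_{it} / A_{ij}`. -/
noncomputable def geStep {m n : ℕ} (A : Matrix (Fin m) (Fin n) ℝ) (i : Fin m) (j : Fin n) :
    Matrix (Fin m) (Fin n) ℝ :=
  Matrix.of fun s t => A s t - A s j * A i t / A i j

/-- The matrix `A^{(r)}` after `r` GE steps on `A`, where step `r` uses pivot
position `piv (r - 1)` (so `piv` is 0-indexed). -/
noncomputable def geIter {m n : ℕ} (A : Matrix (Fin m) (Fin n) ℝ)
    (piv : ℕ → Fin m × Fin n) : ℕ → Matrix (Fin m) (Fin n) ℝ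
  | 0 => A
  | r + 1 => geStep (geIter A piv r) (piv r).1 (piv r).2

/-- Maximum absolute entry of a matrix. -/
noncomputable def maxAbs {m n : ℕ} (A : Matrix (Fin m) (Fin n) ℝ) : ℝ :=
  ⨆ s, ⨆ t, |A s t|

/-- The magnitude `p_r = |A^{(r-1)}_{i_r j_r}|` of the `r`-th pivot (1-indexed `r`). -/
noncomputable def pivMag {m n : ℕ} (A : Matrix (Fin m) (Fin n) ℝ)
    (piv : ℕ → Fin m × Fin n) (r : ℕ) : ℝ :=
  |geIter A piv (r - 1) (piv (r - 1)).1 (piv (r - 1)).2|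

/-- Modified Wilkinson matrix `A₁`: `(A₁)_{st} = 1` if `s = t` or `t = n` (1-based),
`(A₁)_{st} = -β_t⁻¹` if `s > t` and `t < n`, and `0` otherwise. Here indices are
0-based, so column `t` (0-based) corresponds to `β (t+1)`. -/
noncomputable def wilkA1 (n : ℕ) (β : ℕ → ℝ) : Matrix (Fin n) (Fin n) ℝ :=
  Matrix.of fun s t =>
    if (s : ℕ) = (t : ℕ) ∨ (t : ℕ) = n - 1 then 1
    else if (t : ℕ) < (s : ℕ) then -(β ((t : ℕ) + 1))⁻¹ else 0

/-- Diagonal pivot positions `(1,1), (2,2), …` (0-based: `(r, r)` at step `r + 1`). -/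
def diagPiv (n : ℕ) (hn : 0 < n) : ℕ → Fin n × Fin n :=
  fun r => (⟨min r (n - 1), by omega⟩, ⟨min r (n - 1), by omega⟩)

lemma wilk_key (n : ℕ) (hn : 2 ≤ n) (β : ℕ → ℝ) (hn' : 0 < n) :
    ∀ j : ℕ, j ≤ n - 1 → ∀ s t : Fin n,
      geIter (wilkA1 n β) (diagPiv n hn') j s t =
        if (s : ℕ) < j ∨ (t : ℕ) < j then 0
        else if (t : ℕ) = n - 1 then ∏ r ∈ Finset.Icc 1 j, (1 + (β r)⁻¹)
        else wilkA1 n β s t := by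
  intro j
  induction j with
  | zero =>
      intro _ s t
      simp only [Nat.not_lt_zero, or_self, if_false, geIter, Finset.Icc_self]
      split_ifs with h
      · simp [wilkA1, h]
      · rfl
  | succ j ih =>
      intro hj s t
      have hj' : j ≤ n - 1 := by omega
      have hjn : j < n - 1 := by omega
      have hih := ih hj'
      set p : Fin n := ⟨j, by omega⟩ with hp
      have hpj : (p : ℕ) = j := rfl
      have hpiv : diagPiv n hn' j = (p, p) := by
        simp only [diagPiv, hp, Prod.mk.injEq]
        constructor <;> exact Fin.ext (by simp; omega)
      show geStep (geIter (wilkA1 n β) (diagPiv n hn') j) (diagPiv n hn' j).1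
        (diagPiv n hn' j).2 s t = _
      rw [hpiv]
      show geIter (wilkA1 n β) (diagPiv n hn') j s t -
        geIter (wilkA1 n β) (diagPiv n hn') j s p *
        geIter (wilkA1 n β) (diagPiv n hn') j p t /
        geIter (wilkA1 n β) (diagPiv n hn') j p p = _
      have hpp : geIter (wilkA1 n β) (diagPiv n hn') j p p = 1 := by
        rw [hih]
        rw [if_neg (by omega), if_neg (by omega)]
        simp [wilkA1]
      have ha : geIter (wilkA1 n β) (diagPiv n hn') j s t =
          if (s : ℕ) < j ∨ (t : ℕ) < j then 0
          else if (t : ℕ) = n - 1 then ∏ r ∈ Finset.Icc 1 j, (1 + (β r)⁻¹)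
          else if (s : ℕ) = (t : ℕ) then 1
          else if (t : ℕ) < (s : ℕ) then -(β ((t : ℕ) + 1))⁻¹ else 0 := by
        rw [hih s t]
        simp only [wilkA1, Matrix.of_apply]
        split_ifs <;> first | rfl | omega
      have hb : geIter (wilkA1 n β) (diagPiv n hn') j s p =
          if (s : ℕ) < j then 0 else if (s : ℕ) = j then 1 else -(β (j + 1))⁻¹ := by
        rw [hih s p]
        simp only [wilkA1, Matrix.of_apply, hpj]
        split_ifs <;> first | rfl | omega
      have hc : geIter (wilkA1 n β) (diagPiv n hn') j p t =
          if (t : ℕ) < j then 0 else if (t : ℕ) = j then 1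
          else if (t : ℕ) = n - 1 then ∏ r ∈ Finset.Icc 1 j, (1 + (β r)⁻¹) else 0 := by
        rw [hih p t]
        simp only [wilkA1, Matrix.of_apply, hpj]
        split_ifs <;> first | rfl | omega
      rw [ha, hb, hc, hpp, div_one]
      rcases lt_trichotomy ((s : ℕ)) j with hs | hs | hs
      · rw [if_pos (Or.inl hs), if_pos hs,
          if_pos (Or.inl (show (s : ℕ) < j + 1 by omega))]
        ring
      · rw [if_neg (show ¬ (s : ℕ) < j by omega), if_pos hs,
          if_pos (Or.inl (show (s : ℕ) < j + 1 by omega))]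
        rcases lt_trichotomy ((t : ℕ)) j with ht | ht | ht
        · rw [if_pos (Or.inr ht), if_pos ht]; ring
        · rw [if_neg (show ¬ ((s : ℕ) < j ∨ (t : ℕ) < j) by omega),
            if_neg (show ¬ (t : ℕ) = n - 1 by omega),
            if_pos (show (s : ℕ) = (t : ℕ) by omega),
            if_neg (show ¬ (t : ℕ) < j by omega), if_pos ht]
          ring
        · rw [if_neg (show ¬ ((s : ℕ) < j ∨ (t : ℕ) < j) by omega),
            if_neg (show ¬ (t : ℕ) < j by omega),
            if_neg (show ¬ (t : ℕ) = j by omega)]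
          by_cases htn : (t : ℕ) = n - 1
          · rw [if_pos htn, if_pos htn]; ring
          · rw [if_neg htn, if_neg htn,
              if_neg (show ¬ (s : ℕ) = (t : ℕ) by omega),
              if_neg (show ¬ (t : ℕ) < (s : ℕ) by omega)]
            ring
      · rw [if_neg (show ¬ (s : ℕ) < j by omega),
          if_neg (show ¬ (s : ℕ) = j by omega)]
        rcases lt_trichotomy ((t : ℕ)) j with ht | ht | ht
        · rw [if_pos (Or.inr ht), if_pos ht,
            if_pos (Or.inr (show (t : ℕ) < j + 1 by omega))]
          ring
        · rw [if_neg (show ¬ ((s : ℕ) < j ∨ (t : ℕ) < j) by omega),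
            if_neg (show ¬ (t : ℕ) = n - 1 by omega),
            if_neg (show ¬ (s : ℕ) = (t : ℕ) by omega),
            if_pos (show (t : ℕ) < (s : ℕ) by omega),
            if_neg (show ¬ (t : ℕ) < j by omega), if_pos ht,
            if_pos (Or.inr (show (t : ℕ) < j + 1 by omega)), ht]
          ring
        · rw [if_neg (show ¬ ((s : ℕ) < j ∨ (t : ℕ) < j) by omega),
            if_neg (show ¬ (t : ℕ) < j by omega),
            if_neg (show ¬ (t : ℕ) = j by omega),
            if_neg (show ¬ ((s : ℕ) < j + 1 ∨ (t : ℕ) < j + 1) by omega)]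
          by_cases htn : (t : ℕ) = n - 1
          · rw [if_pos htn, if_pos htn, if_pos htn,
              Finset.prod_Icc_succ_top (show 1 ≤ j + 1 by omega)]
            ring
          · rw [if_neg htn, if_neg htn, if_neg htn]
            simp only [wilkA1, Matrix.of_apply, htn, or_false]
            split_ifs <;> first | ring | (exfalso; omega)

/-- **GE with partial pivoting on `A₁`: explicit form of the intermediate matrices.**
After `k` diagonal-pivot GE steps (1-based pivots `(1,1), …, (k,k)`), for all 0-based
indices `s, t ≥ k` the entry `A^{(k)}_{st}` equals `∏_{r=1}^k (1 + β_r⁻¹)` in the last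
column and equals the original entry `(A₁)_{st}` in the other columns; entries in the
first `k` rows or columns are zero. -/
theorem wilkA1_ge_intermediate
    (n : ℕ) (hn : 2 ≤ n) (β : ℕ → ℝ)
    (hβ : ∀ r, 1 ≤ r → r ≤ n - 1 → 0 < β r ∧ β r ≤ 1)
    (k : ℕ) (hk1 : 1 ≤ k) (hk2 : k ≤ n - 1) :
    (∀ s t : Fin n, k ≤ (s : ℕ) → k ≤ (t : ℕ) →
      (((t : ℕ) = n - 1 →
          geIter (wilkA1 n β) (diagPiv n (by omega)) k s t =
            ∏ r ∈ Finset.Icc 1 k, (1 + (β r)⁻¹)) ∧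
        ((t : ℕ) < n - 1 →
          geIter (wilkA1 n β) (diagPiv n (by omega)) k s t = wilkA1 n β s t))) ∧
      (∀ s t : Fin n, (s : ℕ) < k ∨ (t : ℕ) < k →
        geIter (wilkA1 n β) (diagPiv n (by omega)) k s t = 0) := by
  constructor
  · intro s t hs ht
    constructor
    · intro htn
      rw [wilk_key n hn β _ k hk2 s t, if_neg (by omega), if_pos htn]
    · intro htn
      rw [wilk_key n hn β _ k hk2 s t, if_neg (by omega), if_neg (by omega)]
  · intro s t hst
    rw [wilk_key n hn β _ k hk2 s t, if_pos hst]
end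

section
/- Let n ≥ 2, let β_1,…,β_{n−1} ∈ (0,1], and let A_1 be the n×n real matrix with (A_1)_{st} = 1 if s = t or t = n, (A_1)_{st} = −β_t^{-1} if s > t and t < n, and (A_1)_{st} = 0 otherwise. Perform GE on A_1 with the diagonal pivots (1,1), …, (n−1,n−1). Then the pivoting mistakes accumulate multiplicatively: for every 1 ≤ k ≤ n−1 the intermediate growth factor satisfies ρ_k(A_1) ≥ (∏_{r=1}^{k} (1 + β_r^{-1})) / (max_{1 ≤ r ≤ n−1} β_r^{-1}), and for k = n−1 equality holds: ρ_{n−1}(A_1) = (∏_{r=1}^{n−1} (1 + β_r^{-1})) / (max_{1 ≤ r ≤ n−1} β_r^{-1}). -/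
open Finset Real

/-- Closed form for the GE iterates of `wilkA1`. -/
noncomputable def wform (n : ℕ) (β : ℕ → ℝ) (k : ℕ) : Matrix (Fin n) (Fin n) ℝ :=
  Matrix.of fun s t =>
    if (s : ℕ) < k then 0
    else if (t : ℕ) = n - 1 then ∏ r ∈ Finset.Icc 1 k, (1 + (β r)⁻¹)
    else if (s : ℕ) = (t : ℕ) then 1
    else if k ≤ (t : ℕ) ∧ (t : ℕ) < (s : ℕ) then -(β ((t : ℕ) + 1))⁻¹
    else 0

lemma wilkA1_eq_wform0 (n : ℕ) (β : ℕ → ℝ) : wilkA1 n β = wform n β 0 := by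
  funext s t
  simp only [wilkA1, wform, Matrix.of_apply]
  split_ifs <;> first | rfl | omega | (exfalso; omega) | simp

lemma geIter_wform (n : ℕ) (hn : 2 ≤ n) (β : ℕ → ℝ) (hn0 : 0 < n) :
    ∀ k, k ≤ n - 1 → geIter (wilkA1 n β) (diagPiv n hn0) k = wform n β k := by
  intro k
  induction k with
  | zero => intro _; simpa [geIter] using wilkA1_eq_wform0 n β
  | succ k ih =>
    intro hk1
    have hk : k ≤ n - 2 := by omega
    set p : Fin n := ⟨k, by omega⟩ with hp
    have hpv : diagPiv n hn0 k = (p, p) := by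
      simp only [diagPiv, hp, Prod.mk.injEq]
      constructor <;> exact Fin.ext (by simp; omega)
    have h1 : geIter (wilkA1 n β) (diagPiv n hn0) (k + 1)
        = geStep (wform n β k) p p := by
      show geStep (geIter (wilkA1 n β) (diagPiv n hn0) k) (diagPiv n hn0 k).1
            (diagPiv n hn0 k).2 = _
      rw [ih (by omega), hpv]
    rw [h1]
    have hpk : (p : ℕ) = k := rfl
    have hApp : wform n β k p p = 1 := by
      simp only [wform, Matrix.of_apply, hpk]
      split_ifs <;> first | rfl | omega
    have hApt : ∀ t : Fin n, wform n β k p t =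
        if (t : ℕ) = n - 1 then ∏ r ∈ Finset.Icc 1 k, (1 + (β r)⁻¹)
        else if (t : ℕ) = k then 1 else 0 := by
      intro t
      simp only [wform, Matrix.of_apply, hpk]
      split_ifs <;> first | rfl | omega
    have hAsp : ∀ s : Fin n, wform n β k s p =
        if (s : ℕ) < k then 0 else if (s : ℕ) = k then 1 else -(β (k + 1))⁻¹ := by
      intro s
      have hne : (p : ℕ) ≠ n - 1 := by rw [hpk]; omega
      simp only [wform, Matrix.of_apply, hpk, if_neg hne]
      split_ifs <;> first | rfl | omega
    funext s t
    have hs := s.isLt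
    have ht := t.isLt
    show wform n β k s t - wform n β k s p * wform n β k p t / wform n β k p p
        = wform n β (k + 1) s t
    rw [hApp, hAsp s, hApt t]
    simp only [wform, Matrix.of_apply]
    have hprod : ∏ r ∈ Finset.Icc 1 (k + 1), (1 + (β r)⁻¹)
        = (∏ r ∈ Finset.Icc 1 k, (1 + (β r)⁻¹)) * (1 + (β (k + 1))⁻¹) :=
      Finset.prod_Icc_succ_top (by omega) _
    split_ifs <;>
      first
        | omega
        | ring1
        | (rw [hprod]; ring1)
        | (rw [show (t : ℕ) = k by omega]; ring1)


lemma abs_le_maxAbs {m n : ℕ} (A : Matrix (Fin m) (Fin n) ℝ) (s : Fin m) (t : Fin n) :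
    |A s t| ≤ maxAbs A := by
  have h1 : |A s t| ≤ ⨆ t', |A s t'| :=
    le_ciSup (f := fun t' => |A s t'|) (Set.finite_range _).bddAbove t
  have h2 : (⨆ t', |A s t'|) ≤ maxAbs A :=
    le_ciSup (f := fun s' => ⨆ t', |A s' t'|) (Set.finite_range _).bddAbove s
  exact h1.trans h2

lemma maxAbs_eq_of {m n : ℕ} (A : Matrix (Fin m) (Fin n) ℝ) (v : ℝ)
    (hub : ∀ s t, |A s t| ≤ v) (s₀ : Fin m) (t₀ : Fin n) (h : |A s₀ t₀| = v) :
    maxAbs A = v := by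
  haveI : Nonempty (Fin m) := ⟨s₀⟩
  haveI : Nonempty (Fin n) := ⟨t₀⟩
  refine le_antisymm (ciSup_le fun s => ciSup_le fun t => hub s t) ?_
  rw [← h]
  exact abs_le_maxAbs A s₀ t₀

theorem wilkA1_growth_factors'
    (n : ℕ) (hn : 2 ≤ n) (β : ℕ → ℝ)
    (hβ : ∀ r, 1 ≤ r → r ≤ n - 1 → 0 < β r ∧ β r ≤ 1) (hn0 : 0 < n) (h1n : 1 ≤ n - 1) :
    (∀ k, 1 ≤ k → k ≤ n - 1 →
      maxAbs (geIter (wilkA1 n β) (diagPiv n hn0) k) / maxAbs (wilkA1 n β) ≥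
        (∏ r ∈ Finset.Icc 1 k, (1 + (β r)⁻¹)) /
          (Finset.Icc 1 (n - 1)).sup' (Finset.nonempty_Icc.mpr h1n)
            (fun r => (β r)⁻¹)) ∧
    maxAbs (geIter (wilkA1 n β) (diagPiv n hn0) (n - 1)) / maxAbs (wilkA1 n β) =
      (∏ r ∈ Finset.Icc 1 (n - 1), (1 + (β r)⁻¹)) /
        (Finset.Icc 1 (n - 1)).sup' (Finset.nonempty_Icc.mpr h1n)
          (fun r => (β r)⁻¹) := by
  have hne : (Finset.Icc 1 (n - 1)).Nonempty := Finset.nonempty_Icc.mpr (by omega)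
  set M := (Finset.Icc 1 (n - 1)).sup' hne (fun r => (β r)⁻¹) with hMdef
  have hinv1 : ∀ r ∈ Finset.Icc 1 (n - 1), 1 ≤ (β r)⁻¹ := by
    intro r hr
    rw [Finset.mem_Icc] at hr
    obtain ⟨h1, h2⟩ := hβ r hr.1 hr.2
    exact (one_le_inv₀ h1).2 h2
  have hmem1 : (1 : ℕ) ∈ Finset.Icc 1 (n - 1) := Finset.mem_Icc.mpr ⟨le_rfl, by omega⟩
  have hM1 : 1 ≤ M :=
    le_trans (hinv1 1 hmem1) (Finset.le_sup' (fun r => (β r)⁻¹) hmem1)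
  have hM0 : (0 : ℝ) < M := lt_of_lt_of_le one_pos hM1
  -- products
  have hP1 : ∀ k, k ≤ n - 1 → 1 ≤ ∏ r ∈ Finset.Icc 1 k, (1 + (β r)⁻¹) := by
    intro k hk
    have hfac : ∀ r ∈ Finset.Icc 1 k, (1 : ℝ) ≤ 1 + (β r)⁻¹ := by
      intro r hr
      rw [Finset.mem_Icc] at hr
      have := hinv1 r (Finset.mem_Icc.mpr ⟨hr.1, by omega⟩)
      linarith
    calc (1 : ℝ) = ∏ _r ∈ Finset.Icc 1 k, (1 : ℝ) := by simp
      _ ≤ ∏ r ∈ Finset.Icc 1 k, (1 + (β r)⁻¹) :=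
        Finset.prod_le_prod (by intros; norm_num) hfac
  -- maxAbs of the original matrix
  have maxA : maxAbs (wilkA1 n β) = M := by
    obtain ⟨r₀, hr₀m, hr₀⟩ := Finset.exists_mem_eq_sup' hne (fun r => (β r)⁻¹)
    rw [Finset.mem_Icc] at hr₀m
    refine maxAbs_eq_of _ _ ?_ ⟨r₀, by omega⟩ ⟨r₀ - 1, by omega⟩ ?_
    · intro s t
      have ht := t.isLt
      have hs := s.isLt
      simp only [wilkA1, Matrix.of_apply]
      split_ifs with h1 h2
      · simpa using hM1
      · rw [abs_neg, abs_of_nonneg (by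
          have := (hβ ((t : ℕ) + 1) (by omega) (by omega)).1; positivity)]
        exact Finset.le_sup' (fun r => (β r)⁻¹) (Finset.mem_Icc.mpr ⟨by omega, by omega⟩)
      · simpa using le_trans zero_le_one hM1
    · have h1 : ¬((r₀ : ℕ) = r₀ - 1 ∨ r₀ - 1 = n - 1) := by omega
      simp only [wilkA1, Matrix.of_apply]
      rw [if_neg h1, if_pos (by omega : r₀ - 1 < r₀), show r₀ - 1 + 1 = r₀ by omega,
        abs_neg, abs_of_nonneg (by have := (hβ r₀ (by omega) (by omega)).1; positivity)]
      exact hr₀.symm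
  -- lower bound on maxAbs of the iterates
  have hlow : ∀ k, k ≤ n - 1 →
      (∏ r ∈ Finset.Icc 1 k, (1 + (β r)⁻¹)) ≤
        maxAbs (geIter (wilkA1 n β) (diagPiv n hn0) k) := by
    intro k hk
    rw [geIter_wform n hn β hn0 k hk]
    have h := abs_le_maxAbs (wform n β k) ⟨n - 1, by omega⟩ ⟨n - 1, by omega⟩
    have hval : wform n β k (⟨n - 1, by omega⟩ : Fin n) (⟨n - 1, by omega⟩ : Fin n)
        = ∏ r ∈ Finset.Icc 1 k, (1 + (β r)⁻¹) := by
      simp only [wform, Matrix.of_apply]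
      rw [if_neg (by omega)]
      simp
    rw [hval, abs_of_nonneg (le_trans zero_le_one (hP1 k hk))] at h
    exact h
  constructor
  · intro k hk1 hk2
    rw [ge_iff_le, maxA]
    gcongr
    exact hlow k hk2
  · -- equality at k = n - 1
    have maxW : maxAbs (geIter (wilkA1 n β) (diagPiv n hn0) (n - 1))
        = ∏ r ∈ Finset.Icc 1 (n - 1), (1 + (β r)⁻¹) := by
      rw [geIter_wform n hn β hn0 (n - 1) le_rfl]
      have hPnn : (0 : ℝ) ≤ ∏ r ∈ Finset.Icc 1 (n - 1), (1 + (β r)⁻¹) :=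
        le_trans zero_le_one (hP1 _ le_rfl)
      refine maxAbs_eq_of _ _ ?_ ⟨n - 1, by omega⟩ ⟨n - 1, by omega⟩ ?_
      · intro s t
        have ht := t.isLt
        have hs := s.isLt
        simp only [wform, Matrix.of_apply]
        split_ifs <;>
          first
            | (exfalso; omega)
            | (simpa using hPnn)
            | (simp [abs_of_nonneg hPnn])
      · have hval : wform n β (n - 1) (⟨n - 1, by omega⟩ : Fin n)
            (⟨n - 1, by omega⟩ : Fin n) = ∏ r ∈ Finset.Icc 1 (n - 1), (1 + (β r)⁻¹) := by
          simp only [wform, Matrix.of_apply]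
          rw [if_neg (by omega)]
          simp
        rw [hval, abs_of_nonneg hPnn]
    rw [maxW, maxA]

/-- **Partial pivoting does not correct pivoting mistakes.** Performing GE on `A₁` with
the diagonal pivots, for every `1 ≤ k ≤ n-1` the intermediate growth factor satisfies
`ρ_k(A₁) ≥ (∏_{r=1}^k (1 + β_r⁻¹)) / max_{1 ≤ r ≤ n-1} β_r⁻¹`, with equality at
`k = n - 1`. -/
theorem wilkA1_growth_factors
    (n : ℕ) (hn : 2 ≤ n) (β : ℕ → ℝ)
    (hβ : ∀ r, 1 ≤ r → r ≤ n - 1 → 0 < β r ∧ β r ≤ 1) :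
    (∀ k, 1 ≤ k → k ≤ n - 1 →
      maxAbs (geIter (wilkA1 n β) (diagPiv n (by omega)) k) / maxAbs (wilkA1 n β) ≥
        (∏ r ∈ Finset.Icc 1 k, (1 + (β r)⁻¹)) /
          (Finset.Icc 1 (n - 1)).sup' (Finset.nonempty_Icc.mpr (by omega))
            (fun r => (β r)⁻¹)) ∧
    maxAbs (geIter (wilkA1 n β) (diagPiv n (by omega)) (n - 1)) / maxAbs (wilkA1 n β) =
      (∏ r ∈ Finset.Icc 1 (n - 1), (1 + (β r)⁻¹)) /
        (Finset.Icc 1 (n - 1)).sup' (Finset.nonempty_Icc.mpr (by omega))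
          (fun r => (β r)⁻¹) := by
  exact wilkA1_growth_factors' n hn β hβ (by omega) (by omega)
end
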